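/- If w is a real number with w < -1 and w * exp(w) = -2/exp(3), and alpha = 1 - 1/(w + 1), then 1 < alpha < 2 and -2*alpha + 3 + (alpha - 1) * log(2*(alpha - 1)/alpha) = 0. -/

import Mathlib

theorem alpha_root_of_equation (w : ℝ) (hw : w < -1)
    (hweq : w * Real.exp w = -2 / Real.exp 3)
    (alpha : ℝ) (halpha : alpha = 1 - 1 / (w + 1)) :
    1 < alpha ∧ alpha < 2 ∧
      -2 * alpha + 3 + (alpha - 1) * Real.log (2 * (alpha - 1) / alpha) = 0 := by
  have h3 : (0:ℝ) < Real.exp 3 := Real.exp_pos 3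
  have h2 : (0:ℝ) < Real.exp 2 := Real.exp_pos 2
  -- first: w < -2
  have hw2 : w < -2 := by
    by_contra h
    push_neg at h
    have hs : Real.exp (w + 2) ≥ 1 + (w + 2) := by
      have := Real.add_one_le_exp (w + 2); linarith
    have hsp : (0:ℝ) < Real.exp (w + 2) := Real.exp_pos _
    have hdec : Real.exp w = Real.exp (w + 2) * Real.exp (-2) := by
      rw [← Real.exp_add]; ring_nf
    have hbig : (-w) * Real.exp w ≥ 2 * Real.exp (-2) := by
      rw [hdec]
      have hkey : (-w) * Real.exp (w + 2) ≥ 2 := by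
        nlinarith [hs, hsp]
      have hem : (0:ℝ) < Real.exp (-2) := Real.exp_pos _
      nlinarith [hkey, hem]
    have hval : (-w) * Real.exp w = 2 / Real.exp 3 := by
      rw [neg_mul, hweq]; ring
    rw [hval] at hbig
    have hinv : Real.exp (-2) = 1 / Real.exp 2 := by
      rw [Real.exp_neg]; simp [one_div]
    rw [hinv] at hbig
    have h23 : Real.exp 2 < Real.exp 3 := Real.exp_lt_exp.mpr (by norm_num)
    have : 2 / Real.exp 3 < 2 / Real.exp 2 := by
      apply div_lt_div_of_pos_left <;> linarith
    have h' : 2 / Real.exp 2 = 2 * (1 / Real.exp 2) := by ring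
    linarith [this, hbig, h']
  have hw1 : w + 1 < -1 := by linarith
  have hw1ne : w + 1 ≠ 0 := by linarith
  have hwne : w ≠ 0 := by intro h; rw [h] at hw2; norm_num at hw2
  have hu : (1 / (w + 1)) * (w + 1) = 1 := by field_simp
  have hinv : -1 < 1 / (w + 1) ∧ 1 / (w + 1) < 0 := by
    constructor
    · nlinarith [hu, hw1]
    · exact div_neg_of_pos_of_neg one_pos (by linarith)
  have ha1 : 1 < alpha := by rw [halpha]; linarith [hinv.2]
  have ha2 : alpha < 2 := by rw [halpha]; linarith [hinv.1]
  refine ⟨ha1, ha2, ?_⟩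
  have hane : alpha ≠ 0 := by linarith
  -- alpha = w / (w+1)
  have halt : alpha = w / (w + 1) := by
    rw [halpha]; field_simp; ring
  -- 2*(alpha-1)/alpha = -2/w = exp (w+3)
  have hexp : Real.exp w = -2 / (w * Real.exp 3) := by
    field_simp at hweq ⊢
    nlinarith [hweq]
  have harg : 2 * (alpha - 1) / alpha = Real.exp (w + 3) := by
    rw [Real.exp_add, hexp, halt]
    field_simp
    ring
  rw [harg, Real.log_exp, halt]
  field_simp
  ring
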